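/- Let l ≡ 1 (mod 4) be an integer and q a positive integer. Write τ(χ, q) = Σ_{j mod N} χ(j)e(jq/N) for a character χ mod N. For the Kronecker symbol χ^{(4l)} = (4l|·) viewed modulo 4l, one has: τ(χ^{(4l)}, q) = 0 if q is odd; τ(χ^{(4l)}, q) = -2τ(χ_l, q) if q ≡ 2 (mod 4); and τ(χ^{(4l)}, q) = 2τ(χ_l, q) if q ≡ 0 (mod 4), where χ_l is the Jacobi symbol character mod l. -/

import Mathlib

/-- The Kronecker symbol `(m | n)` for `n : ℕ`: multiplicative in `n`, with
`(m | 2) = χ₈(m)` and `(m | odd part)` the Jacobi symbol; `(m | 0) = 1` iff `m = ±1`. -/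
noncomputable def kronSym (m : ℤ) (n : ℕ) : ℤ :=
  if n = 0 then (if m = 1 ∨ m = -1 then 1 else 0)
  else (ZMod.χ₈ (m : ZMod 8)) ^ (n.factorization 2) * jacobiSym m (n / 2 ^ (n.factorization 2))

open Finset in
lemma sum_range_two_mul' {M : Type*} [AddCommMonoid M] (n : ℕ) (f : ℕ → M) :
    ∑ j ∈ range (2*n), f j = ∑ k ∈ range n, (f (2*k) + f (2*k+1)) := by
  induction n with
  | zero => simp
  | succ n ih =>
      have h : 2*(n+1) = (2*n) + 1 + 1 := by ring
      rw [h, Finset.sum_range_succ, Finset.sum_range_succ, ih, Finset.sum_range_succ, add_assoc]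

open Finset in
lemma sum_range_val' {M : Type*} [AddCommMonoid M] (l : ℕ) [NeZero l] (f : ℕ → M) :
    ∑ x : ZMod l, f x.val = ∑ k ∈ range l, f k := by
  refine Finset.sum_nbij' (fun x => x.val) (fun k => (k : ZMod l)) ?_ ?_ ?_ ?_ ?_
  · intro x _; exact Finset.mem_range.mpr x.val_lt
  · intro k _; exact Finset.mem_univ _
  · intro x _; exact ZMod.natCast_zmod_val x
  · intro k hk; exact ZMod.val_cast_of_lt (Finset.mem_range.mp hk)
  · intro x _; rfl

lemma kron_even (l k : ℕ) (hl : l % 4 = 1) : kronSym (4*(l:ℤ)) (2*k) = 0 := by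
  unfold kronSym
  rcases Nat.eq_zero_or_pos k with rfl | hk
  · rw [if_pos (by omega), if_neg (by omega)]
  · rw [if_neg (by omega)]
    have h8 : ((4*(l:ℤ) : ℤ) : ZMod 8) = ((4 : ℤ) : ZMod 8) := by
      rw [ZMod.intCast_eq_intCast_iff']
      omega
    rw [h8]
    have hχ : ZMod.χ₈ (((4:ℤ)) : ZMod 8) = 0 := by decide
    rw [hχ, zero_pow, zero_mul]
    exact (Nat.Prime.factorization_pos_of_dvd Nat.prime_two (by omega) ⟨k, rfl⟩).ne'

lemma kron_odd (l k : ℕ) (hl : l % 4 = 1) :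
    kronSym (4*(l:ℤ)) (2*k+1) = jacobiSym ((2*k+1 : ℕ) : ℤ) l := by
  unfold kronSym
  rw [if_neg (by omega)]
  have hv : (2*k+1).factorization 2 = 0 :=
    Nat.factorization_eq_zero_of_not_dvd (by omega)
  rw [hv, pow_zero, pow_zero, one_mul, Nat.div_one]
  rw [jacobiSym.mul_left]
  have hg : Int.gcd 2 (2*k+1 : ℕ) = 1 := by
    simp [Int.gcd]
  have h41 : jacobiSym (4 : ℤ) (2*k+1) = 1 := by
    have : (4 : ℤ) = 2^2 := by norm_num
    rw [this, jacobiSym.sq_one' hg]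
  rw [h41, one_mul]
  have := jacobiSym.quadratic_reciprocity_one_mod_four (a := l) (b := 2*k+1) hl
    (Nat.odd_iff.mpr (by omega))
  exact_mod_cast this

/-- for `l ≡ 1 (mod 4)` and `q > 0`, the Gauss sum of the Kronecker symbol
`χ^{(4l)}` modulo `4l` vanishes for odd `q` and equals `∓2 τ(χ_l, q)` according to
`q ≡ 2, 0 (mod 4)`. -/
theorem stmt3 (l : ℕ) (hl : l % 4 = 1) (q : ℕ) (hq : 0 < q)
    (τ4 τl : ℂ)
    (hτ4 : τ4 = ∑ j ∈ Finset.range (4 * l), (kronSym (4 * (l : ℤ)) j : ℂ) *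
      Complex.exp (2 * Real.pi * Complex.I * (j : ℂ) * (q : ℂ) / ((4 * l : ℕ) : ℂ)))
    (hτl : τl = ∑ j ∈ Finset.range l, (jacobiSym (j : ℤ) l : ℂ) *
      Complex.exp (2 * Real.pi * Complex.I * (j : ℂ) * (q : ℂ) / (l : ℂ))) :
    (Odd q → τ4 = 0) ∧
    (q % 4 = 2 → τ4 = -2 * τl) ∧
    (q % 4 = 0 → τ4 = 2 * τl) := by
  have hl2 : l % 2 = 1 := by omega
  have hlpos : 0 < l := by omega
  haveI : NeZero l := ⟨by omega⟩
  have hlC : (l : ℂ) ≠ 0 := Nat.cast_ne_zero.mpr (by omega)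
  -- Step 1 : keep only odd indices
  have step1 : τ4 = ∑ k ∈ Finset.range (2*l),
      ((jacobiSym ((2*k+1 : ℕ) : ℤ) l : ℤ) : ℂ) *
        Complex.exp (2 * Real.pi * Complex.I * ((2*k+1 : ℕ) : ℂ) * (q:ℂ) / (4 * (l:ℂ))) := by
    rw [hτ4]
    have h : 4*l = 2*(2*l) := by ring
    rw [h, sum_range_two_mul']
    refine Finset.sum_congr rfl fun k _ => ?_
    rw [kron_even l k hl, kron_odd l k hl]
    push_cast
    ring_nf
  -- Step 2 : fold the range 2l to range l
  have step2 : τ4 = (1 + (-1:ℂ)^q) * ∑ k ∈ Finset.range l,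
      ((jacobiSym ((2*k+1 : ℕ) : ℤ) l : ℤ) : ℂ) *
        Complex.exp (2 * Real.pi * Complex.I * ((2*k+1 : ℕ) : ℂ) * (q:ℂ) / (4 * (l:ℂ))) := by
    rw [step1]
    have h : 2*l = l + l := by ring
    rw [h, Finset.sum_range_add]
    have hterm : ∀ k ∈ Finset.range l,
        ((jacobiSym ((2*(l+k)+1 : ℕ) : ℤ) l : ℤ) : ℂ) *
          Complex.exp (2 * Real.pi * Complex.I * ((2*(l+k)+1 : ℕ) : ℂ) * (q:ℂ) / (4 * (l:ℂ)))
        = (-1:ℂ)^q * (((jacobiSym ((2*k+1 : ℕ) : ℤ) l : ℤ) : ℂ) *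
          Complex.exp (2 * Real.pi * Complex.I * ((2*k+1 : ℕ) : ℂ) * (q:ℂ) / (4 * (l:ℂ)))) := by
      intro k _
      have hj : jacobiSym ((2*(l+k)+1 : ℕ) : ℤ) l = jacobiSym ((2*k+1 : ℕ) : ℤ) l := by
        apply jacobiSym.mod_left'
        have h1 : ((2*(l+k)+1 : ℕ) : ℤ) = ((2*k+1 : ℕ) : ℤ) + (l:ℤ)*2 := by push_cast; ring
        rw [h1, Int.add_mul_emod_self_left]
      have harg : 2 * (Real.pi:ℂ) * Complex.I * ((2*(l+k)+1 : ℕ) : ℂ) * (q:ℂ) / (4 * (l:ℂ))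
          = 2 * (Real.pi:ℂ) * Complex.I * ((2*k+1 : ℕ) : ℂ) * (q:ℂ) / (4 * (l:ℂ))
            + (q:ℂ) * ((Real.pi:ℂ) * Complex.I) := by
        field_simp
        push_cast
        ring
      rw [hj, harg, Complex.exp_add, Complex.exp_nat_mul, Complex.exp_pi_mul_I]
      ring
    rw [Finset.sum_congr rfl hterm, ← Finset.mul_sum]
    ring
  -- Step 3 : the key reindexing for even q
  have key : ∀ q' : ℕ, q = 2*q' →
      (∑ k ∈ Finset.range l,
        ((jacobiSym ((2*k+1 : ℕ) : ℤ) l : ℤ) : ℂ) *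
          Complex.exp (2 * Real.pi * Complex.I * ((2*k+1 : ℕ) : ℂ) * (q:ℂ) / (4 * (l:ℂ))))
      = (-1:ℂ)^q' * τl := by
    intro q' hqq
    have hcop2 : Nat.Coprime 2 l := Nat.coprime_two_left.mpr (Nat.odd_iff.mpr hl2)
    have hcop4 : Nat.Coprime 4 l := by
      have h4 : (4:ℕ) = 2^2 := rfl
      rw [h4]; exact hcop2.pow_left _
    set u2 : (ZMod l)ˣ := ZMod.unitOfCoprime 2 hcop2 with hu2def
    set u4 : (ZMod l)ˣ := ZMod.unitOfCoprime 4 hcop4 with hu4def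
    have hu2 : (u2 : ZMod l) = 2 := by
      rw [hu2def, ZMod.coe_unitOfCoprime]; push_cast; ring
    have hu4 : (u4 : ZMod l) = 4 := by
      rw [hu4def, ZMod.coe_unitOfCoprime]; push_cast; ring
    let e : ZMod l ≃ ZMod l :=
      (Units.mulLeft u2).trans ((Equiv.addRight (1 : ZMod l)).trans (Units.mulLeft u4⁻¹))
    have he : ∀ x : ZMod l, e x = (u4⁻¹ : (ZMod l)ˣ) * (2 * x + 1) := by
      intro x
      simp only [e, Equiv.trans_apply, Units.mulLeft_apply, Equiv.coe_addRight, hu2]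
    -- pointwise identity
    have hpoint : ∀ x : ZMod l,
        ((jacobiSym ((2*x.val+1 : ℕ) : ℤ) l : ℤ) : ℂ) *
          Complex.exp (2 * Real.pi * Complex.I * ((2*x.val+1 : ℕ) : ℂ) * (q:ℂ) / (4 * (l:ℂ)))
        = (-1:ℂ)^q' * (((jacobiSym (((e x).val : ℕ) : ℤ) l : ℤ) : ℂ) *
          Complex.exp (2 * Real.pi * Complex.I * (((e x).val : ℕ) : ℂ) * (q:ℂ) / (l:ℂ))) := by
      intro x
      set k := x.val with hk
      set m := (e x).val with hm
      -- the congruence 4 m ≡ 2 k + 1 [MOD l]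
      have hcong : 4*m ≡ 2*k+1 [MOD l] := by
        rw [← ZMod.natCast_eq_natCast_iff]
        push_cast
        rw [hm, ZMod.natCast_zmod_val, he x, hk, ZMod.natCast_zmod_val]
        rw [← mul_assoc]
        have : (4 : ZMod l) * (u4⁻¹ : (ZMod l)ˣ) = 1 := by
          rw [← hu4, Units.mul_inv]
        rw [this, one_mul]
      obtain ⟨t, ht⟩ := Nat.ModEq.dvd hcong
      push_cast at ht
      have htodd : Odd t := by
        have h1 : Odd ((2*k+1 : ℤ) - 4*m) := by
          rw [Int.odd_iff]; omega
        rw [ht] at h1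
        exact (Int.odd_mul.mp h1).2
      obtain ⟨s, hs⟩ := htodd
      have hZ : ((2*k+1 : ℕ) : ℤ) = 4*(m:ℤ) + (l:ℤ)*(2*s+1) := by
        push_cast
        rw [hs] at ht
        push_cast at ht
        linear_combination ht
      -- Jacobi symbols agree
      have hj : jacobiSym ((2*k+1 : ℕ) : ℤ) l = jacobiSym ((m : ℕ) : ℤ) l := by
        have h1 : jacobiSym ((2*k+1 : ℕ) : ℤ) l = jacobiSym (4*(m:ℤ)) l := by
          apply jacobiSym.mod_left'
          rw [hZ, Int.add_mul_emod_self_left]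
        rw [h1, jacobiSym.mul_left]
        have hg : Int.gcd 2 l = 1 := hcop2
        have h41 : jacobiSym (4 : ℤ) l = 1 := by
          have h4 : (4 : ℤ) = 2^2 := by norm_num
          rw [h4, jacobiSym.sq_one' hg]
        rw [h41, one_mul]
      -- exponentials
      have hqC : (q:ℂ) = 2*(q':ℂ) := by exact_mod_cast congrArg (fun n : ℕ => (n:ℂ)) hqq
      have hC : ((2*k+1 : ℕ) : ℂ) = 4*(m:ℂ) + (l:ℂ)*(2*(s:ℂ)+1) := by
        exact_mod_cast congrArg (fun z : ℤ => (z:ℂ)) hZ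
      have harg : 2 * (Real.pi:ℂ) * Complex.I * ((2*k+1 : ℕ) : ℂ) * (q:ℂ) / (4 * (l:ℂ))
          = 2 * (Real.pi:ℂ) * Complex.I * ((m:ℕ) : ℂ) * (q:ℂ) / (l:ℂ)
            + (((s*(q':ℤ)) : ℤ):ℂ) * (2 * (Real.pi:ℂ) * Complex.I)
            + (q':ℂ) * ((Real.pi:ℂ) * Complex.I) := by
        rw [hC, hqC]
        push_cast
        field_simp
        ring
      rw [hj, harg, Complex.exp_add, Complex.exp_add, Complex.exp_int_mul_two_pi_mul_I,
        Complex.exp_nat_mul, Complex.exp_pi_mul_I]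
      ring
    calc
      ∑ k ∈ Finset.range l,
          ((jacobiSym ((2*k+1 : ℕ) : ℤ) l : ℤ) : ℂ) *
            Complex.exp (2 * Real.pi * Complex.I * ((2*k+1 : ℕ) : ℂ) * (q:ℂ) / (4 * (l:ℂ)))
        = ∑ x : ZMod l,
          ((jacobiSym ((2*x.val+1 : ℕ) : ℤ) l : ℤ) : ℂ) *
            Complex.exp (2 * Real.pi * Complex.I * ((2*x.val+1 : ℕ) : ℂ) * (q:ℂ) / (4 * (l:ℂ))) := by
          rw [sum_range_val' l (fun k => ((jacobiSym ((2*k+1 : ℕ) : ℤ) l : ℤ) : ℂ) *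
            Complex.exp (2 * Real.pi * Complex.I * ((2*k+1 : ℕ) : ℂ) * (q:ℂ) / (4 * (l:ℂ))))]
      _ = ∑ x : ZMod l, (-1:ℂ)^q' * (((jacobiSym (((e x).val : ℕ) : ℤ) l : ℤ) : ℂ) *
            Complex.exp (2 * Real.pi * Complex.I * (((e x).val : ℕ) : ℂ) * (q:ℂ) / (l:ℂ))) := by
          exact Finset.sum_congr rfl fun x _ => hpoint x
      _ = (-1:ℂ)^q' * ∑ x : ZMod l, (((jacobiSym (((e x).val : ℕ) : ℤ) l : ℤ) : ℂ) *
            Complex.exp (2 * Real.pi * Complex.I * (((e x).val : ℕ) : ℂ) * (q:ℂ) / (l:ℂ))) := by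
          rw [Finset.mul_sum]
      _ = (-1:ℂ)^q' * ∑ y : ZMod l, (((jacobiSym ((y.val : ℕ) : ℤ) l : ℤ) : ℂ) *
            Complex.exp (2 * Real.pi * Complex.I * ((y.val : ℕ) : ℂ) * (q:ℂ) / (l:ℂ))) := by
          rw [Equiv.sum_comp e (fun y : ZMod l => ((jacobiSym ((y.val : ℕ) : ℤ) l : ℤ) : ℂ) *
            Complex.exp (2 * Real.pi * Complex.I * ((y.val : ℕ) : ℂ) * (q:ℂ) / (l:ℂ)))]
      _ = (-1:ℂ)^q' * τl := by
          rw [hτl, sum_range_val' l (fun j => ((jacobiSym ((j:ℕ) : ℤ) l : ℤ) : ℂ) *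
            Complex.exp (2 * Real.pi * Complex.I * ((j:ℕ) : ℂ) * (q:ℂ) / (l:ℂ)))]
  refine ⟨?_, ?_, ?_⟩
  · intro hodd
    rw [step2, Odd.neg_one_pow hodd]
    ring
  · intro h2
    have hqq : q = 2*(q/2) := by omega
    have hodd : Odd (q/2) := Nat.odd_iff.mpr (by omega)
    have heven : Even q := by rw [Nat.even_iff]; omega
    rw [step2, key (q/2) hqq, Odd.neg_one_pow hodd, Even.neg_one_pow heven]
    ring
  · intro h0
    have hqq : q = 2*(q/2) := by omega
    have heven' : Even (q/2) := by rw [Nat.even_iff]; omega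
    have heven : Even q := by rw [Nat.even_iff]; omega
    rw [step2, key (q/2) hqq, Even.neg_one_pow heven', Even.neg_one_pow heven]
    ring
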